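/- For every t ∈ [0,∞): the map f_{1,t}(z) = (1/(2z))·(e^t(z+1)² − 2z − e^{t/2}(z+1)·√(e^t(z+1)² − 4z)) (extended holomorphically by f_{1,t}(0) = 0) belongs to 𝒰 and maps D injectively onto D \ [2e^t − 1 − 2e^{t/2}·√(e^t − 1), 1); likewise f_{2,t}(z) = (1/(2z))·(e^t(z−1)² + 2z + e^{t/2}(z−1)·√(e^t(z−1)² + 4z)) (extended by f_{2,t}(0) = 0) belongs to 𝒰 and maps D injectively onto D \ (−1, −2e^t + 1 + 2e^{t/2}·√(e^t − 1)]. -/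

import Mathlib

open Complex Set Filter Topology

noncomputable section

/-- The open unit disc. -/
def uDisc : Set ℂ := {z : ℂ | ‖z‖ < 1}

/-- The holomorphic branch of the square root with `√1 = 1` (principal branch). -/
def csqrt (z : ℂ) : ℂ := z ^ (1/2 : ℂ)

/-- `f` has only real Taylor coefficients at `0`, expressed by the symmetry
`f(conj z) = conj (f z)` on the unit disc. -/
def RealCoeffs (f : ℂ → ℂ) : Prop :=
  ∀ z ∈ uDisc, f ((starRingEnd ℂ) z) = (starRingEnd ℂ) (f z)

/-- The class `𝒰` of univalent self-maps of the unit disc with `f(0) = 0`,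
`f'(0) > 0` and real Taylor coefficients. -/
def ClassU (f : ℂ → ℂ) : Prop :=
  DifferentiableOn ℂ f uDisc ∧ InjOn f uDisc ∧ MapsTo f uDisc uDisc ∧
    f 0 = 0 ∧ 0 < (deriv f 0).re ∧ (deriv f 0).im = 0 ∧ RealCoeffs f

/-- The value range `V_𝒰(z0)`. -/
def VU (z0 : ℂ) : Set ℂ := {w : ℂ | ∃ f : ℂ → ℂ, ClassU f ∧ f z0 = w}

/-- The slit mapping `f_{1,t}`, extended holomorphically by `f_{1,t}(0) = 0`. -/
def slitMap1 (t : ℝ) (z : ℂ) : ℂ :=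
  if z = 0 then 0 else
  (1/(2*z)) * (Real.exp t * (z+1)^2 - 2*z -
    Real.exp (t/2) * (z+1) * csqrt (Real.exp t * (z+1)^2 - 4*z))

/-- The slit mapping `f_{2,t}`, extended holomorphically by `f_{2,t}(0) = 0`. -/
def slitMap2 (t : ℝ) (z : ℂ) : ℂ :=
  if z = 0 then 0 else
  (1/(2*z)) * (Real.exp t * (z-1)^2 + 2*z +
    Real.exp (t/2) * (z-1) * csqrt (Real.exp t * (z-1)^2 + 4*z))

namespace SP

lemma csqrt_sq (w : ℂ) : csqrt w ^ 2 = w := by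
  unfold csqrt
  by_cases h : w = 0
  · simp [h, Complex.zero_cpow (by norm_num : (1/2:ℂ) ≠ 0)]
  · rw [sq, ← Complex.cpow_add _ _ h]; norm_num

lemma conj_csqrt {x : ℂ} (hx : x ∈ Complex.slitPlane) :
    (starRingEnd ℂ) (csqrt x) = csqrt ((starRingEnd ℂ) x) := by
  unfold csqrt
  have h2 : (starRingEnd ℂ) (1/2 : ℂ) = 1/2 := by simp [Complex.ext_iff]
  rw [Complex.conj_cpow _ _ (Complex.slitPlane_arg_ne_pi hx), h2]

def qq (t : ℝ) (z : ℂ) : ℂ := (Real.exp t : ℂ) * (z+1)^2 - 4*z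
def AA (t : ℝ) (z : ℂ) : ℂ := (Real.exp t : ℂ) * (z+1)^2 - 2*z
def den (t : ℝ) (z : ℂ) : ℂ :=
  AA t z + (Real.exp (t/2) : ℂ) * (z+1) * csqrt (qq t z)
def FF (t : ℝ) (z : ℂ) : ℂ := 2*z / den t z

lemma exp_half_sq (t : ℝ) : ((Real.exp (t/2) : ℝ) : ℂ)^2 = ((Real.exp t : ℝ) : ℂ) := by
  rw [← Complex.ofReal_pow, sq, ← Real.exp_add]
  norm_num

lemma mem_uDisc {z : ℂ} : z ∈ uDisc ↔ ‖z‖ < 1 := Iff.rfl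

lemma sq_lt {z : ℂ} (hz : z ∈ uDisc) : z.re^2 + z.im^2 < 1 := by
  rw [mem_uDisc] at hz
  have h2 := Complex.sq_norm z
  rw [Complex.normSq_apply] at h2
  nlinarith [norm_nonneg z]

lemma q_slit {t : ℝ} (ht : 0 ≤ t) {z : ℂ} (hz : z ∈ uDisc) : qq t z ∈ Complex.slitPlane := by
  have hb := sq_lt hz
  have hE : (1:ℝ) ≤ Real.exp t := Real.one_le_exp ht
  have hEpos : (0:ℝ) < Real.exp t := Real.exp_pos t
  rw [Complex.mem_slitPlane_iff]
  have hre : (qq t z).re = Real.exp t * ((z.re+1)^2 - z.im^2) - 4*z.re := by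
    simp [qq, Complex.mul_re, Complex.mul_im, pow_two, -Complex.ofReal_exp]; try ring
  have him : (qq t z).im = 2*z.im*(Real.exp t * (z.re+1) - 2) := by
    simp [qq, Complex.mul_re, Complex.mul_im, pow_two, -Complex.ofReal_exp]; try ring
  rw [hre, him]
  by_cases hy : z.im = 0
  · left
    rw [hy]
    have hx1 : z.re < 1 := by nlinarith
    nlinarith
  · by_cases hc : Real.exp t * (z.re+1) - 2 = 0
    · left
      have h1 : Real.exp t * (z.re+1) = 2 := by linarith
      have hylt : z.im^2 < 1 - z.re^2 := by nlinarith
      nlinarith [mul_lt_mul_of_pos_left hylt hEpos]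
    · right
      exact mul_ne_zero (mul_ne_zero two_ne_zero hy) hc

lemma q_ne {t : ℝ} (ht : 0 ≤ t) {z : ℂ} (hz : z ∈ uDisc) : qq t z ≠ 0 :=
  Complex.slitPlane_ne_zero (q_slit ht hz)

lemma den_sq {t : ℝ} (z : ℂ) :
    ((Real.exp (t/2) : ℂ) * (z+1) * csqrt (qq t z))^2 = AA t z ^2 - 4*z^2 := by
  have h1 : ((Real.exp (t/2) : ℂ) * (z+1) * csqrt (qq t z))^2
      = (Real.exp t : ℂ) * (z+1)^2 * qq t z := by
    rw [mul_pow, mul_pow, csqrt_sq, ← exp_half_sq t]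
  rw [h1]; unfold qq AA; ring

lemma csqrt_exp (t : ℝ) : csqrt ((Real.exp t : ℝ) : ℂ) = ((Real.exp (t/2) : ℝ) : ℂ) := by
  unfold csqrt
  rw [show (1/2:ℂ) = ((1/2:ℝ):ℂ) by norm_num, ← Complex.ofReal_cpow (Real.exp_pos t).le,
    ← Real.exp_mul]
  rw [show t * (1/2) = t/2 by ring]

lemma den_zero (t : ℝ) : den t 0 = 2*(Real.exp t : ℂ) := by
  unfold den AA qq
  simp only [zero_add, one_pow, mul_one, mul_zero, sub_zero]
  rw [csqrt_exp, ← exp_half_sq t]; ring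

lemma den_ne {t : ℝ} (ht : 0 ≤ t) {z : ℂ} (hz : z ∈ uDisc) : den t z ≠ 0 := by
  intro h
  have hB : (Real.exp (t/2) : ℂ) * (z+1) * csqrt (qq t z) = -AA t z := by
    unfold den at h; linear_combination h
  have h4 : (4:ℂ)*z^2 = 0 := by
    have := den_sq (t := t) z
    rw [hB] at this
    linear_combination this
  have hz0 : z = 0 := by
    have hz2 : z^2 = 0 := by linear_combination h4/4
    exact (pow_eq_zero_iff two_ne_zero).1 hz2
  rw [hz0, den_zero] at h
  simp [Real.exp_ne_zero] at h


noncomputable def aa (t : ℝ) : ℝ := 2*Real.exp t - 1 - 2*Real.exp (t/2) * Real.sqrt (Real.exp t - 1)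

lemma hp2 (t : ℝ) : Real.exp (t/2)^2 = Real.exp t := by
  rw [sq, ← Real.exp_add]; norm_num

lemma hs2 {t : ℝ} (ht : 0 ≤ t) : Real.sqrt (Real.exp t - 1)^2 = Real.exp t - 1 :=
  Real.sq_sqrt (by nlinarith [Real.one_le_exp ht])

lemma aa_pos {t : ℝ} (ht : 0 ≤ t) : 0 < aa t := by
  have h1 := hp2 t
  have h2 := hs2 ht
  have h3 := Real.sqrt_nonneg (Real.exp t - 1)
  have h4 := Real.exp_pos (t/2)
  have h5 := Real.one_le_exp ht
  unfold aa
  nlinarith [sq_nonneg (2*Real.exp (t/2) * Real.sqrt (Real.exp t - 1) - (2*Real.exp t - 1)),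
    sq_nonneg (Real.exp (t/2) * Real.sqrt (Real.exp t - 1))]

lemma aa_le_one {t : ℝ} (ht : 0 ≤ t) : aa t ≤ 1 := by
  have h1 := hp2 t
  have h2 := hs2 ht
  have h3 := Real.sqrt_nonneg (Real.exp t - 1)
  have h4 := Real.exp_pos (t/2)
  have h5 := Real.one_le_exp ht
  unfold aa
  nlinarith [sq_nonneg (Real.exp (t/2) * Real.sqrt (Real.exp t - 1) - (Real.exp t - 1))]

lemma aa_sq {t : ℝ} (ht : 0 ≤ t) : (1 + aa t)^2 = 4*(Real.exp t)*(aa t) := by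
  have h1 := hp2 t
  have h2 := hs2 ht
  unfold aa
  nlinarith [h1, h2]

lemma phi_ge {t x : ℝ} (ht : 0 ≤ t) (hx : aa t ≤ x) (hx1 : x < 1) :
    (1+x)^2 ≤ 4*(Real.exp t)*x := by
  have hsq := aa_sq ht
  have hpos := aa_pos ht
  have hle := aa_le_one ht
  have h1 : aa t*(4*(Real.exp t)*x - (1+x)^2) = (x - aa t)*(1- aa t*x) := by
    linear_combination -x*hsq
  have hax : aa t * x < 1 := by nlinarith
  nlinarith [mul_nonneg (sub_nonneg.2 hx) (le_of_lt (sub_pos.2 hax))]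

lemma phi_lt {t x : ℝ} (ht : 0 ≤ t) (hx0 : 0 < x) (hxa : x < aa t) :
    4*(Real.exp t)*x < (1+x)^2 := by
  have hsq := aa_sq ht
  have hpos := aa_pos ht
  have hle := aa_le_one ht
  have h1 : aa t*((1+x)^2 - 4*(Real.exp t)*x) = (aa t - x)*(1- aa t*x) := by
    linear_combination x*hsq
  have hax : aa t * x < 1 := by nlinarith
  nlinarith [mul_pos (sub_pos.2 hxa) (sub_pos.2 hax)]

lemma quarter_lt {t x : ℝ} (ht : 0 ≤ t) (hx1 : -1 < x) (hx2 : x < 1) :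
    x < (1/4)*(Real.exp t)*(1+x)^2 := by
  have h5 := Real.one_le_exp ht
  nlinarith [sq_nonneg (1-x), mul_pos (show (0:ℝ) < 1+x by linarith) (show (0:ℝ) < 1+x by linarith),
    mul_nonneg (sub_nonneg.2 h5) (sq_nonneg (1+x))]

lemma one_add_ne {z : ℂ} (hz : z ∈ uDisc) : 1 + z ≠ 0 := by
  intro h
  have : z = -1 := by linear_combination h
  rw [mem_uDisc, this] at hz; simp at hz

lemma one_sub_mul_ne {z w : ℂ} (hz : z ∈ uDisc) (hw : w ∈ uDisc) : 1 - z*w ≠ 0 := by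
  intro h
  have h1 : ‖z*w‖ < 1 := by
    rw [norm_mul]
    nlinarith [norm_nonneg z, norm_nonneg w, mem_uDisc.1 hz, mem_uDisc.1 hw]
  have hzw : z*w = 1 := by linear_combination -h
  rw [hzw] at h1; simp at h1

lemma hInj {z w : ℂ} (hz : z ∈ uDisc) (hw : w ∈ uDisc)
    (h : z*(1+w)^2 = w*(1+z)^2) : z = w := by
  have hf : (z - w)*(1 - z*w) = 0 := by linear_combination h
  rcases mul_eq_zero.1 hf with h1 | h2
  · linear_combination h1
  · exact absurd h2 (one_sub_mul_ne hz hw)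

lemma hReal {z : ℂ} (hz : z ∈ uDisc) (him : (z/(1+z)^2).im = 0) : z.im = 0 := by
  have h1 : 1 + z ≠ 0 := one_add_ne hz
  have h1c : 1 + (starRingEnd ℂ) z ≠ 0 := by
    intro h
    have : (starRingEnd ℂ) z = -1 := by linear_combination h
    have : z = -1 := by
      have := congrArg (starRingEnd ℂ) this
      simpa using this
    rw [mem_uDisc, this] at hz; simp at hz
  have hc : (starRingEnd ℂ) (z/(1+z)^2) = z/(1+z)^2 := Complex.conj_eq_iff_im.2 him
  have hc2 : (starRingEnd ℂ) z / (1 + (starRingEnd ℂ) z)^2 = z/(1+z)^2 := by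
    simpa [map_div₀, map_pow, map_add, map_one] using hc
  have hcross : (starRingEnd ℂ) z * (1+z)^2 = z * (1 + (starRingEnd ℂ) z)^2 := by
    field_simp at hc2
    linear_combination hc2
  have hfac : (z - (starRingEnd ℂ) z) * (1 - z * (starRingEnd ℂ) z) = 0 := by
    linear_combination -hcross
  have hne : 1 - z * (starRingEnd ℂ) z ≠ 0 := by
    rw [Complex.mul_conj]
    intro h
    have : ((Complex.normSq z : ℝ) : ℂ) = 1 := by linear_combination -h
    have h2 : Complex.normSq z = 1 := by exact_mod_cast this
    have := mem_uDisc.1 hz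
    rw [← Complex.sq_norm] at h2
    nlinarith [norm_nonneg z]
  rcases mul_eq_zero.1 hfac with h1' | h2'
  · have : (starRingEnd ℂ) z = z := by linear_combination -h1'
    exact Complex.conj_eq_iff_im.1 this
  · exact absurd h2' hne

lemma hcirc {v w : ℂ} (hv : ‖v‖ = 1) (h : w*(1+v)^2 = v) :
    w.im = 0 ∧ 1/4 ≤ w.re := by
  have hv0 : v ≠ 0 := by intro h0; rw [h0] at hv; simp at hv
  have hvm1 : v ≠ -1 := by
    intro h0
    rw [h0] at h; norm_num at h
  have hxy : v.re^2 + v.im^2 = 1 := by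
    have := Complex.sq_norm v
    rw [Complex.normSq_apply, hv] at this
    nlinarith
  have hvv : v * (starRingEnd ℂ) v = 1 := by
    rw [Complex.mul_conj]
    norm_cast
    rw [← Complex.sq_norm, hv]; norm_num
  have hx1 : v.re ≠ -1 := by
    intro h0
    apply hvm1
    have hy : v.im = 0 := by nlinarith
    apply Complex.ext <;> simp [h0, hy]
  have hxle : v.re ≤ 1 := by nlinarith
  have hxpos : (0:ℝ) < 2 + 2*v.re := by
    rcases lt_or_eq_of_le (by nlinarith : (-1:ℝ) ≤ v.re) with h' | h'
    · linarith
    · exact absurd h'.symm hx1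
  have hkey : w * ((2 + 2*v.re : ℝ) : ℂ) = 1 := by
    have hs : v + (starRingEnd ℂ) v = ((2*v.re : ℝ) : ℂ) := Complex.add_conj v
    have h2 : w * (2 + v + (starRingEnd ℂ) v) * v = 1 * v := by
      linear_combination h + w*hvv
    have h3 := mul_right_cancel₀ hv0 h2
    push_cast at hs ⊢
    linear_combination h3 - w*hs
  have hne2 : ((2+2*v.re:ℝ):ℂ) ≠ 0 := by exact_mod_cast hxpos.ne'
  have hw : w = ((1/(2+2*v.re) : ℝ) : ℂ) := by
    rw [show ((1/(2+2*v.re):ℝ):ℂ) = 1/((2+2*v.re:ℝ):ℂ) by push_cast; ring]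
    rw [eq_div_iff hne2]
    exact hkey
  constructor
  · rw [hw]; exact Complex.ofReal_im _
  · rw [hw, Complex.ofReal_re]
    rw [div_le_div_iff₀ (by norm_num : (0:ℝ) < 4) hxpos]
    nlinarith


lemma hOnto {w : ℂ} (hw : w.im ≠ 0 ∨ w.re < 1/4) :
    ∃ z : ℂ, ‖z‖ < 1 ∧ w*(1+z)^2 = z := by
  by_cases hw0 : w = 0
  · exact ⟨0, by simp, by simp [hw0]⟩
  set δ := csqrt (1 - 4*w) with hδdef
  have hδ : δ^2 = 1 - 4*w := csqrt_sq _
  set r₁ := (1-2*w-δ)/(2*w) with hr₁def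
  set r₂ := (1-2*w+δ)/(2*w) with hr₂def
  have h2w : (2:ℂ)*w ≠ 0 := mul_ne_zero two_ne_zero hw0
  have hroot₁ : w*(1+r₁)^2 = r₁ := by
    rw [hr₁def]
    field_simp
    ring_nf
    linear_combination hδ
  have hroot₂ : w*(1+r₂)^2 = r₂ := by
    rw [hr₂def]
    field_simp
    ring_nf
    linear_combination hδ
  have hprod : r₁ * r₂ = 1 := by
    rw [hr₁def, hr₂def]
    field_simp
    linear_combination -hδ
  by_cases h₁ : ‖r₁‖ < 1
  · exact ⟨r₁, h₁, hroot₁⟩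
  by_cases h₂ : ‖r₂‖ < 1
  · exact ⟨r₂, h₂, hroot₂⟩
  · push_neg at h₁ h₂
    exfalso
    have habs : ‖r₁‖ * ‖r₂‖ = 1 := by
      rw [← norm_mul, hprod]; simp
    have h1 : ‖r₁‖ = 1 := by nlinarith
    obtain ⟨him, hre⟩ := hcirc h1 hroot₁
    rcases hw with h | h
    · exact h him
    · linarith

lemma slitMap1_eq_FF {t : ℝ} (ht : 0 ≤ t) {z : ℂ} (hz : z ∈ uDisc) :
    slitMap1 t z = FF t z := by
  by_cases h0 : z = 0
  · simp [h0, slitMap1, FF]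
  · have hd := den_ne ht hz
    have hsq := den_sq (t := t) z
    unfold slitMap1 FF
    rw [if_neg h0]
    have harg : (Real.exp t : ℂ) * (z+1)^2 - 4*z = qq t z := rfl
    have h2z : (2:ℂ)*z ≠ 0 := mul_ne_zero two_ne_zero h0
    rw [harg, eq_div_iff hd, div_mul_eq_mul_div, div_mul_eq_mul_div, div_eq_iff h2z]
    unfold den AA at hsq ⊢
    linear_combination -hsq

lemma uDisc_open : IsOpen uDisc := by
  have : uDisc = Metric.ball (0:ℂ) 1 := by
    ext z; simp [uDisc, Metric.mem_ball, Complex.dist_eq]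
  rw [this]; exact Metric.isOpen_ball

lemma zero_mem : (0:ℂ) ∈ uDisc := by simp [uDisc]

lemma den_diff {t : ℝ} (ht : 0 ≤ t) {z : ℂ} (hz : z ∈ uDisc) :
    DifferentiableAt ℂ (den t) z := by
  have hq : DifferentiableAt ℂ (qq t) z := by
    unfold qq; fun_prop
  have hcs : DifferentiableAt ℂ (fun w => csqrt (qq t w)) z := by
    have := hq.cpow (differentiableAt_const (1/2 : ℂ)) (q_slit ht hz)
    simpa [csqrt] using this
  unfold den AA
  fun_prop

lemma FF_diff {t : ℝ} (ht : 0 ≤ t) {z : ℂ} (hz : z ∈ uDisc) :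
    DifferentiableAt ℂ (FF t) z := by
  unfold FF
  exact (differentiableAt_id.const_mul 2).div (den_diff ht hz) (den_ne ht hz)

lemma slitMap1_diffOn {t : ℝ} (ht : 0 ≤ t) : DifferentiableOn ℂ (slitMap1 t) uDisc := by
  intro z hz
  refine DifferentiableAt.differentiableWithinAt ?_
  refine ((FF_diff ht hz).congr_of_eventuallyEq ?_)
  filter_upwards [uDisc_open.mem_nhds hz] with w hw
  exact slitMap1_eq_FF ht hw

lemma hasDeriv0 {t : ℝ} (ht : 0 ≤ t) :
    HasDerivAt (slitMap1 t) (((Real.exp t : ℝ) : ℂ))⁻¹ 0 := by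
  have hden : HasDerivAt (den t) (deriv (den t) 0) 0 :=
    (den_diff ht zero_mem).hasDerivAt
  have hnum : HasDerivAt (fun z : ℂ => 2*z) 2 0 := by
    simpa using (hasDerivAt_id (0:ℂ)).const_mul (2:ℂ)
  have h := hnum.div hden (by rw [den_zero]; simp [Real.exp_ne_zero])
  have hval : (2 * den t 0 - 2*(0:ℂ) * deriv (den t) 0) / den t 0 ^ 2
      = ((Real.exp t : ℝ) : ℂ)⁻¹ := by
    rw [den_zero]
    have : ((Real.exp t : ℝ):ℂ) ≠ 0 := by simp [Real.exp_ne_zero]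
    field_simp
    ring
  rw [hval] at h
  refine h.congr_of_eventuallyEq ?_
  filter_upwards [uDisc_open.mem_nhds zero_mem] with w hw
  exact slitMap1_eq_FF ht hw

-- key identity
lemma key_sq {t : ℝ} (z : ℂ) :
    (den t z + 2*z)^2 = 2*(Real.exp t : ℂ)*(1+z)^2*(den t z) := by
  have hsq := den_sq (t := t) z
  unfold den AA at hsq ⊢
  linear_combination hsq

lemma hrel {t : ℝ} (ht : 0 ≤ t) {z : ℂ} (hz : z ∈ uDisc) :
    (Real.exp t : ℂ) * FF t z * (1+z)^2 = z * (1 + FF t z)^2 := by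
  have hd := den_ne ht hz
  have hk := key_sq (t := t) z
  unfold FF
  field_simp [-Complex.ofReal_exp]
  simp only [Complex.ofReal_exp] at hk ⊢
  linear_combination -z*hk

lemma one_add_FF_ne {t : ℝ} (ht : 0 ≤ t) {z : ℂ} (hz : z ∈ uDisc) : 1 + FF t z ≠ 0 := by
  have hd := den_ne ht hz
  intro h
  have h2 : den t z + 2*z = 0 := by
    unfold FF at h
    field_simp [-Complex.ofReal_exp] at h
    linear_combination h
  have hk := key_sq (t := t) z
  rw [h2] at hk
  have : (2:ℂ)*(Real.exp t : ℂ)*(1+z)^2*(den t z) = 0 := by linear_combination -hk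
  have hE : ((Real.exp t : ℝ) : ℂ) ≠ 0 := by
    simpa using Real.exp_ne_zero t
  have h1z := one_add_ne hz
  simpa [hE, h1z, hd, pow_eq_zero_iff] using this

lemma absFF_ne_one {t : ℝ} (ht : 0 ≤ t) {z : ℂ} (hz : z ∈ uDisc) :
    ‖FF t z‖ ≠ 1 := by
  intro h1
  set v := FF t z with hv
  have hE : ((Real.exp t : ℝ) : ℂ) ≠ 0 := by simpa using Real.exp_ne_zero t
  have h1z := one_add_ne hz
  set w := z/((Real.exp t : ℂ)*(1+z)^2) with hwdef
  have hw : w * (1+v)^2 = v := by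
    rw [hwdef]
    have hrel' := hrel ht hz
    rw [div_mul_eq_mul_div, div_eq_iff (by exact mul_ne_zero hE (pow_ne_zero 2 h1z))]
    linear_combination -hrel'
  obtain ⟨him, hre⟩ := hcirc h1 hw
  -- z/(1+z)^2 = E * w  is real
  have hzq : z/(1+z)^2 = (Real.exp t : ℂ) * w := by
    rw [hwdef]; field_simp [-Complex.ofReal_exp]
  have him2 : (z/(1+z)^2).im = 0 := by
    rw [hzq]
    simp [Complex.mul_im, -Complex.ofReal_exp, him]
  have hzim := hReal hz him2
  -- so z is real, z = x
  have hzx : z = ((z.re : ℝ) : ℂ) := by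
    apply Complex.ext <;> simp [hzim]
  have hxb : |z.re| < 1 := by
    have := mem_uDisc.1 hz
    rw [hzx] at this
    simpa using this
  have hx1 : -1 < z.re := by cases abs_lt.1 hxb; assumption
  have hx2 : z.re < 1 := by cases abs_lt.1 hxb; assumption
  have h1xne : ((1 + z.re : ℝ) : ℂ) ≠ 0 := by
    simp only [ne_eq, Complex.ofReal_eq_zero]
    linarith
  have hwx : w = ((z.re/((Real.exp t)*(1+z.re)^2) : ℝ) : ℂ) := by
    rw [hwdef, hzx]
    push_cast
    simp only [Complex.ofReal_re]
    try ring
  have hwre : w.re = z.re/((Real.exp t)*(1+z.re)^2) := by rw [hwx, Complex.ofReal_re]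
  have hq := quarter_lt (t := t) ht hx1 hx2
  have hpos : (0:ℝ) < (Real.exp t)*(1+z.re)^2 := by
    have : (0:ℝ) < 1 + z.re := by linarith
    positivity
  rw [hwre] at hre
  rw [le_div_iff₀ hpos] at hre
  nlinarith

lemma FF_zero (t : ℝ) : FF t 0 = 0 := by simp [FF]

lemma uDisc_preconn : IsPreconnected uDisc := by
  have : uDisc = Metric.ball (0:ℂ) 1 := by
    ext z; simp [uDisc, Metric.mem_ball, Complex.dist_eq]
  rw [this]
  exact (convex_ball (0:ℂ) 1).isPreconnected

lemma FF_maps {t : ℝ} (ht : 0 ≤ t) : MapsTo (FF t) uDisc uDisc := by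
  intro z hz
  rw [mem_uDisc]
  set S := (fun z => ‖FF t z‖) '' uDisc with hS
  have hcont : ContinuousOn (fun z => ‖FF t z‖) uDisc := by
    apply continuous_norm.comp_continuousOn
    intro w hw
    exact (FF_diff ht hw).continuousAt.continuousWithinAt
  have hpre : IsPreconnected S := uDisc_preconn.image _ hcont
  have h0 : (0:ℝ) ∈ S := ⟨0, zero_mem, by simp [FF_zero]⟩
  have hmem : ‖FF t z‖ ∈ S := ⟨z, hz, rfl⟩
  by_contra hge
  push_neg at hge
  have hgt : 1 < ‖FF t z‖ :=
    lt_of_le_of_ne hge (Ne.symm (absFF_ne_one ht hz))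
  have : (1:ℝ) ∈ S := hpre.Icc_subset h0 hmem ⟨by norm_num, hgt.le⟩
  obtain ⟨u, hu, habs⟩ := this
  exact absFF_ne_one ht hu habs

lemma FF_inj {t : ℝ} (ht : 0 ≤ t) : InjOn (FF t) uDisc := by
  intro z hz w hw h
  have h1 := hrel ht hz
  have h2 := hrel ht hw
  rw [h] at h1
  have hF := pow_ne_zero 2 (one_add_FF_ne ht hw)
  have hE : ((Real.exp t : ℝ) : ℂ) ≠ 0 := by simpa using Real.exp_ne_zero t
  apply hInj hz hw
  apply mul_right_cancel₀ hF
  calc z*(1+w)^2*(1 + FF t w)^2 = (1+w)^2 * (z * (1+FF t w)^2) := by ring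
    _ = (1+w)^2 * ((Real.exp t : ℂ) * FF t w * (1+z)^2) := by rw [← h1]
    _ = (1+z)^2 * ((Real.exp t : ℂ) * FF t w * (1+w)^2) := by ring
    _ = (1+z)^2 * (w * (1 + FF t w)^2) := by rw [h2]
    _ = w*(1+z)^2*(1 + FF t w)^2 := by ring

lemma real_mem_uDisc {x : ℝ} : ((x:ℝ):ℂ) ∈ uDisc ↔ |x| < 1 := by
  simp [uDisc]

lemma hQuarter {z : ℂ} (hz : z ∈ uDisc) (him : (z/(1+z)^2).im = 0) :
    (z/(1+z)^2).re < 1/4 := by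
  have hzim := hReal hz him
  have hzx : z = ((z.re : ℝ) : ℂ) := by apply Complex.ext <;> simp [hzim]
  have hxb : |z.re| < 1 := by
    have := mem_uDisc.1 hz; rw [hzx] at this; simpa using this
  obtain ⟨hx1, hx2⟩ := abs_lt.1 hxb
  have h1x : (0:ℝ) < 1 + z.re := by linarith
  have hval : z/(1+z)^2 = ((z.re/(1+z.re)^2 : ℝ) : ℂ) := by
    rw [hzx]; push_cast; simp only [Complex.ofReal_re]
  rw [hval, Complex.ofReal_re]
  have hq := quarter_lt (t := 0) le_rfl hx1 hx2
  rw [Real.exp_zero] at hq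
  rw [div_lt_iff₀ (by positivity)]
  linarith

lemma image1 {t : ℝ} (ht : 0 ≤ t) :
    slitMap1 t '' uDisc = uDisc \ (Complex.ofReal '' Ico (aa t) 1) := by
  have hE : ((Real.exp t : ℝ) : ℂ) ≠ 0 := by simp [Real.exp_ne_zero]
  have hEpos : (0:ℝ) < Real.exp t := Real.exp_pos t
  ext w
  constructor
  · rintro ⟨z, hz, rfl⟩
    rw [slitMap1_eq_FF ht hz]
    constructor
    · exact FF_maps ht hz
    · rintro ⟨x, ⟨hxa, hx1⟩, hxw⟩
      have hxpos : 0 < x := lt_of_lt_of_le (aa_pos ht) hxa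
      have h1x : (0:ℝ) < 1 + x := by linarith
      have h1xc : ((1:ℂ) + (x:ℝ)) ≠ 0 := by
        intro h
        have : (1 + x : ℝ) = 0 := by exact_mod_cast congrArg Complex.re h
        linarith
      have hr := hrel ht hz
      rw [← hxw] at hr
      have hcast : ((Real.exp t * x/(1+x)^2 : ℝ) : ℂ)
          = (Real.exp t : ℂ)*(x:ℂ)/((1+(x:ℂ))^2) := by
        push_cast [-Complex.ofReal_exp]
        ring
      have hH : z/(1+z)^2 = ((Real.exp t * x/(1+x)^2 : ℝ) : ℂ) := by
        rw [hcast, div_eq_div_iff (pow_ne_zero 2 (one_add_ne hz)) (pow_ne_zero 2 h1xc)]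
        linear_combination -hr
      have him : (z/(1+z)^2).im = 0 := by rw [hH]; exact Complex.ofReal_im _
      have hlt := hQuarter hz him
      rw [hH, Complex.ofReal_re] at hlt
      have hge := phi_ge ht hxa hx1
      rw [div_lt_iff₀ (by positivity)] at hlt
      nlinarith
  · rintro ⟨hw, hws⟩
    set W : ℂ := (Real.exp t : ℂ) * (w/(1+w)^2) with hWdef
    have h1w := one_add_ne hw
    have hWcond : W.im ≠ 0 ∨ W.re < 1/4 := by
      by_cases him : (w/(1+w)^2).im = 0
      · right
        have hwim := hReal hw him
        have hwx : w = ((w.re : ℝ) : ℂ) := by apply Complex.ext <;> simp [hwim]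
        have hxb : |w.re| < 1 := by
          have := mem_uDisc.1 hw; rw [hwx] at this; simpa using this
        obtain ⟨hx1, hx2⟩ := abs_lt.1 hxb
        have hxa : w.re < aa t := by
          by_contra hge
          push_neg at hge
          exact hws ⟨w.re, ⟨hge, hx2⟩, hwx.symm⟩
        have h1x : (0:ℝ) < 1 + w.re := by linarith
        have hWval : W = ((Real.exp t * (w.re/(1+w.re)^2) : ℝ) : ℂ) := by
          rw [hWdef, hwx]
          push_cast [-Complex.ofReal_exp]
          simp only [Complex.ofReal_re]
          try ring
        rw [hWval, Complex.ofReal_re]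
        rcases le_or_gt w.re 0 with hle | hpos
        · have : Real.exp t * (w.re/(1+w.re)^2) ≤ 0 := by
            apply mul_nonpos_of_nonneg_of_nonpos hEpos.le
            exact div_nonpos_of_nonpos_of_nonneg hle (sq_nonneg _)
          linarith
        · have hlt := phi_lt ht hpos hxa
          rw [show Real.exp t * (w.re/(1+w.re)^2) = Real.exp t * w.re/(1+w.re)^2 by ring,
            div_lt_iff₀ (by positivity)]
          linarith
      · left
        rw [hWdef]
        have : ((Real.exp t : ℝ):ℂ).im = 0 := by simp
        rw [Complex.mul_im, this]
        simp only [Complex.ofReal_re, zero_mul, add_zero]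
        exact mul_ne_zero (Real.exp_ne_zero t) him
    obtain ⟨z, hzabs, hzeq⟩ := hOnto hWcond
    have hz : z ∈ uDisc := hzabs
    have hF := FF_maps ht hz
    have h2 : (Real.exp t : ℂ)*w*(1+z)^2 = z*(1+w)^2 := by
      have h3 : W * (1+w)^2 = (Real.exp t:ℂ) * w := by
        rw [hWdef, mul_assoc, div_mul_cancel₀ _ (pow_ne_zero 2 h1w)]
      calc (Real.exp t : ℂ)*w*(1+z)^2 = (W*(1+w)^2)*(1+z)^2 := by rw [h3]
        _ = (W*(1+z)^2)*(1+w)^2 := by ring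
        _ = z*(1+w)^2 := by rw [hzeq]
    have hrelz := hrel ht hz
    have hcross : FF t z * (1+w)^2 = w*(1 + FF t z)^2 := by
      apply mul_left_cancel₀ (mul_ne_zero hE (pow_ne_zero 2 (one_add_ne hz)))
      linear_combination (1+w)^2*hrelz - (1+FF t z)^2*h2
    have := hInj hF hw hcross
    exact ⟨z, hz, by rw [slitMap1_eq_FF ht hz, this]⟩

lemma realCoeffs1 {t : ℝ} (ht : 0 ≤ t) : RealCoeffs (slitMap1 t) := by
  intro z hz
  by_cases h0 : z = 0
  · simp [h0, slitMap1]
  · have hc0 : (starRingEnd ℂ) z ≠ 0 := by simpa using h0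
    unfold slitMap1
    rw [if_neg h0, if_neg hc0]
    rw [map_mul, map_sub, map_sub, map_mul, map_mul, map_mul, map_div₀, map_mul,
      map_pow, map_add, map_one,
      conj_csqrt (x := (Real.exp t : ℂ)*(z+1)^2 - 4*z) (q_slit ht hz)]
    simp only [Complex.conj_ofReal, map_ofNat, map_one, map_sub, map_mul, map_add, map_pow]
    try norm_num

lemma slitMap2_eq_neg (t : ℝ) (z : ℂ) : slitMap2 t z = -slitMap1 t (-z) := by
  unfold slitMap1 slitMap2
  by_cases h0 : z = 0
  · simp [h0]
  · have hn0 : -z ≠ 0 := neg_ne_zero.2 h0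
    rw [if_neg h0, if_neg hn0]
    have harg : (Real.exp t : ℂ) * (-z+1)^2 - 4*(-z) = (Real.exp t : ℂ) * (z-1)^2 + 4*z := by
      ring
    rw [harg]
    field_simp
    ring

lemma negMem {z : ℂ} (hz : z ∈ uDisc) : -z ∈ uDisc := by
  rw [mem_uDisc] at *; simpa using hz

lemma classU1 {t : ℝ} (ht : 0 ≤ t) : ClassU (slitMap1 t) := by
  have hd := (hasDeriv0 ht).deriv
  refine ⟨slitMap1_diffOn ht, ?_, ?_, ?_, ?_, ?_, realCoeffs1 ht⟩
  · intro z hz w hw h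
    rw [slitMap1_eq_FF ht hz, slitMap1_eq_FF ht hw] at h
    exact FF_inj ht hz hw h
  · intro z hz
    rw [slitMap1_eq_FF ht hz]
    exact FF_maps ht hz
  · simp [slitMap1]
  · rw [hd, ← Complex.ofReal_inv]
    rw [Complex.ofReal_re]; exact inv_pos.2 (Real.exp_pos t)
  · rw [hd, ← Complex.ofReal_inv]
    simp

lemma hF2 (t : ℝ) : slitMap2 t = fun z => -slitMap1 t (-z) := funext (slitMap2_eq_neg t)

lemma classU2 {t : ℝ} (ht : 0 ≤ t) : ClassU (slitMap2 t) := by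
  rw [hF2]
  have hdiff : DifferentiableOn ℂ (fun z => -slitMap1 t (-z)) uDisc := by
    intro z hz
    have h1 : DifferentiableAt ℂ (slitMap1 t) (-z) :=
      ((slitMap1_diffOn ht) (-z) (negMem hz)).differentiableAt (uDisc_open.mem_nhds (negMem hz))
    exact ((h1.comp z (differentiable_neg z)).neg).differentiableWithinAt
  have hder : HasDerivAt (fun z => -slitMap1 t (-z)) (((Real.exp t : ℝ) : ℂ))⁻¹ 0 := by
    have h1 : HasDerivAt (slitMap1 t) (((Real.exp t : ℝ) : ℂ))⁻¹ (-(0:ℂ)) := by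
      simpa using hasDeriv0 ht
    have hneg : HasDerivAt (fun z : ℂ => -z) (-1) 0 := by
      exact (hasDerivAt_id' (0:ℂ)).neg
    have hcomp := HasDerivAt.comp (0:ℂ) h1 hneg
    have := hcomp.neg
    exact this.congr_deriv (by ring)
  refine ⟨hdiff, ?_, ?_, ?_, ?_, ?_, ?_⟩
  · intro z hz w hw h
    have h2 : slitMap1 t (-z) = slitMap1 t (-w) := by
      have := congrArg Neg.neg h
      simpa using this
    have := FF_inj ht (negMem hz) (negMem hw)
      (by rw [← slitMap1_eq_FF ht (negMem hz), ← slitMap1_eq_FF ht (negMem hw)]; exact h2)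
    simpa using congrArg Neg.neg this
  · intro z hz
    rw [mem_uDisc]
    simp only [norm_neg]
    rw [slitMap1_eq_FF ht (negMem hz)]
    exact FF_maps ht (negMem hz)
  · simp [slitMap1]
  · rw [hder.deriv, ← Complex.ofReal_inv]
    rw [Complex.ofReal_re]; exact inv_pos.2 (Real.exp_pos t)
  · rw [hder.deriv, ← Complex.ofReal_inv]
    simp
  · intro z hz
    simp only []
    rw [show -(starRingEnd ℂ) z = (starRingEnd ℂ) (-z) by rw [map_neg],
      realCoeffs1 ht (-z) (negMem hz), ← map_neg]

lemma image2 {t : ℝ} (ht : 0 ≤ t) :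
    slitMap2 t '' uDisc = uDisc \ (Complex.ofReal '' Ioc (-1) (-(aa t))) := by
  rw [hF2]
  have h1 : (fun z => -slitMap1 t (-z)) '' uDisc = Neg.neg '' (slitMap1 t '' uDisc) := by
    ext w
    constructor
    · rintro ⟨z, hz, rfl⟩
      exact ⟨slitMap1 t (-z), ⟨-z, negMem hz, rfl⟩, rfl⟩
    · rintro ⟨v, ⟨z, hz, rfl⟩, rfl⟩
      exact ⟨-z, negMem hz, by simp⟩
  rw [h1, image1 ht]
  ext w
  simp only [mem_image, mem_diff, mem_uDisc]
  constructor
  · rintro ⟨v, ⟨hv1, hv2⟩, rfl⟩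
    refine ⟨by simpa using hv1, ?_⟩
    rintro ⟨x, hx, hxw⟩
    apply hv2
    exact ⟨-x, ⟨by linarith [hx.2], by linarith [hx.1]⟩, by push_cast; linear_combination -hxw⟩
  · rintro ⟨hw1, hw2⟩
    refine ⟨-w, ⟨by simpa using hw1, ?_⟩, by simp⟩
    rintro ⟨x, hx, hxw⟩
    apply hw2
    exact ⟨-x, ⟨by linarith [hx.2], by linarith [hx.1]⟩, by push_cast; linear_combination -hxw⟩

end SP

theorem slitMaps_mem_ClassU (t : ℝ) (ht : 0 ≤ t) :
    (ClassU (slitMap1 t) ∧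
      slitMap1 t '' uDisc = uDisc \ (Complex.ofReal ''
        Ico (2*Real.exp t - 1 - 2*Real.exp (t/2) * Real.sqrt (Real.exp t - 1)) 1)) ∧
    (ClassU (slitMap2 t) ∧
      slitMap2 t '' uDisc = uDisc \ (Complex.ofReal ''
        Ioc (-1) (-2*Real.exp t + 1 + 2*Real.exp (t/2) * Real.sqrt (Real.exp t - 1)))) := by
  refine ⟨⟨SP.classU1 ht, ?_⟩, ⟨SP.classU2 ht, ?_⟩⟩
  · exact SP.image1 ht
  · rw [show (-2*Real.exp t + 1 + 2*Real.exp (t/2) * Real.sqrt (Real.exp t - 1)) = -(SP.aa t) by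
      unfold SP.aa; ring]
    exact SP.image2 ht
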